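/- (Correctness of the fusion-generation algorithm) Let 𝓜₀ be a finite indexed family of machines over T with d_min(𝓜₀) = d, and let F_1, …, F_f be machines over T such that for each k ∈ {1, …, f}, F_k separates every pair of distinct states t ≠ t' with d_{𝓜_{k−1}}(t,t') = d_min(𝓜_{k−1}), where 𝓜_k denotes the family 𝓜₀ extended by F_1, …, F_k. Then d_min(𝓜_f) = d + f. In particular, if 𝓜₀ is a family of primaries with d_min(𝓜₀) = 1, then d_min(𝓜_f) = f + 1 > f, i.e., (F_1, …, F_f) is an (f, f)-fusion of 𝓜₀. -/

import Mathlib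

open scoped Classical

/-- A machine over `T` (a closed partition of `T`): an equivalence relation on `T`
that is preserved by the transition function `δ`. -/
structure Machine (T : Type*) (E : Type*) (δ : T → E → T) where
  rel : T → T → Prop
  equiv : Equivalence rel
  closed : ∀ x y : T, rel x y → ∀ e : E, rel (δ x e) (δ y e)

/-- The distance `d_𝓜(t,t')`: the number of machines in the family `M` that
separate `t` and `t'`. -/
noncomputable def fdist {T E ι : Type*} {δ : T → E → T} [Fintype ι]
    (M : ι → Machine T E δ) (t t' : T) : ℕ :=
  (Finset.univ.filter fun i => ¬ (M i).rel t t').card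

/-- The minimum distance `d_min(𝓜)`: the minimum of `fdist M t t'` over all pairs
of distinct states `t ≠ t'`. -/
noncomputable def dmin {T E ι : Type*} {δ : T → E → T} [Fintype ι]
    (M : ι → Machine T E δ) : ℕ :=
  sInf {d : ℕ | ∃ t t' : T, t ≠ t' ∧ d = fdist M t t'}

/-- The family `𝓜_k`: the base family `M0` extended by the first `k` of the
machines `F 0, …, F (f-1)`. -/
noncomputable def extFam {T E ι : Type*} {δ : T → E → T} [Fintype ι] {f : ℕ}
    (M0 : ι → Machine T E δ) (F : Fin f → Machine T E δ)
    (k : ℕ) (hk : k ≤ f) : ι ⊕ Fin k → Machine T E δ :=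
  Sum.elim M0 (fun j => F (Fin.castLE hk j))

lemma fdist_eq_sum {T E ι : Type*} {δ : T → E → T} [Fintype ι]
    (M : ι → Machine T E δ) (t t' : T) :
    fdist M t t' = ∑ i, if (M i).rel t t' then 0 else 1 := by
  unfold fdist
  rw [Finset.card_filter]
  congr 1; ext i; by_cases h : (M i).rel t t' <;> simp [h]

lemma fdist_extFam_succ {T E ι : Type*} {δ : T → E → T} [Fintype ι] {f : ℕ}
    (M0 : ι → Machine T E δ) (F : Fin f → Machine T E δ)
    {k : ℕ} (hk : k + 1 ≤ f) (t t' : T) :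
    fdist (extFam M0 F (k+1) hk) t t'
      = fdist (extFam M0 F k (Nat.le_of_succ_le hk)) t t'
        + (if (F ⟨k, hk⟩).rel t t' then 0 else 1) := by
  simp only [fdist_eq_sum]
  rw [Fintype.sum_sum_type, Fintype.sum_sum_type, Fin.sum_univ_castSucc]
  have e1 : ∀ j : Fin k, Fin.castLE hk j.castSucc = Fin.castLE (Nat.le_of_succ_le hk) j :=
    fun j => Fin.ext rfl
  have e2 : Fin.castLE hk (Fin.last k) = ⟨k, hk⟩ := Fin.ext rfl
  simp only [extFam, Sum.elim_inr, Sum.elim_inl, e1, e2]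
  simp only [Nat.add_comm, Nat.add_left_comm]; congr 1

lemma dmin_mem {T E ι : Type*} [Nontrivial T] {δ : T → E → T} [Fintype ι]
    (M : ι → Machine T E δ) :
    ∃ t t' : T, t ≠ t' ∧ dmin M = fdist M t t' := by
  obtain ⟨t, t', h⟩ := exists_pair_ne T
  have : dmin M ∈ {d : ℕ | ∃ t t' : T, t ≠ t' ∧ d = fdist M t t'} :=
    Nat.sInf_mem ⟨fdist M t t', t, t', h, rfl⟩
  exact this

lemma dmin_le {T E ι : Type*} {δ : T → E → T} [Fintype ι]
    (M : ι → Machine T E δ) {t t' : T} (h : t ≠ t') :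
    dmin M ≤ fdist M t t' :=
  Nat.sInf_le ⟨t, t', h, rfl⟩

/-- Correctness of the fusion-generation algorithm: if each `F k`
separates every minimum-distance pair of the family `𝓜_k = M0 ⊕ (F 0, …, F (k-1))`,
then `d_min(𝓜_f) = d + f`; in particular when `d = 1`, `(F 0, …, F (f-1))` is an
`(f, f)`-fusion of `M0`. -/
theorem genFusion_correct {T E ι : Type*} [Fintype T] [Nontrivial T] [Fintype ι]
    {δ : T → E → T} (M0 : ι → Machine T E δ) (f : ℕ) (F : Fin f → Machine T E δ)
    (d : ℕ) (hd : dmin M0 = d)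
    (hsep : ∀ k : Fin f, ∀ t t' : T, t ≠ t' →
      fdist (extFam M0 F k.1 k.isLt.le) t t' = dmin (extFam M0 F k.1 k.isLt.le) →
      ¬ (F k).rel t t') :
    dmin (Sum.elim M0 F) = d + f ∧ (d = 1 → dmin (Sum.elim M0 F) > f) := by
  have key : ∀ k, ∀ hk : k ≤ f, dmin (extFam M0 F k hk) = d + k := by
    intro k
    induction k with
    | zero =>
      intro hk
      have hfd : ∀ t t' : T, fdist (extFam M0 F 0 hk) t t' = fdist M0 t t' := by
        intro t t'
        simp [fdist_eq_sum, Fintype.sum_sum_type, extFam]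
        congr 1
      have : dmin (extFam M0 F 0 hk) = dmin M0 := by
        unfold dmin
        congr 1
        ext x
        simp only [Set.mem_setOf_eq, hfd]
      omega
    | succ k ih =>
      intro hk
      have hk' : k ≤ f := Nat.le_of_succ_le hk
      have ihk := ih hk'
      -- upper bound
      obtain ⟨t, t', hne, heq⟩ := dmin_mem (extFam M0 F k hk')
      have hF : ¬ (F ⟨k, hk⟩).rel t t' := hsep ⟨k, hk⟩ t t' hne heq.symm
      have hub : fdist (extFam M0 F (k+1) hk) t t' = d + k + 1 := by
        rw [fdist_extFam_succ M0 F hk, if_neg hF, ← heq, ihk]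
      have hle : dmin (extFam M0 F (k+1) hk) ≤ d + k + 1 := by
        rw [← hub]; exact dmin_le _ hne
      -- lower bound
      obtain ⟨s, s', hss, hval⟩ := dmin_mem (extFam M0 F (k+1) hk)
      have hlow : d + k ≤ fdist (extFam M0 F k hk') s s' := by
        rw [← ihk]; exact dmin_le _ hss
      have hge : d + k + 1 ≤ fdist (extFam M0 F (k+1) hk) s s' := by
        rw [fdist_extFam_succ M0 F hk]
        by_cases hc : fdist (extFam M0 F k hk') s s' = d + k
        · have hF' : ¬ (F ⟨k, hk⟩).rel s s' :=
            hsep ⟨k, hk⟩ s s' hss (hc.trans ihk.symm)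
          rw [if_neg hF', hc]
        · have : d + k + 1 ≤ fdist (extFam M0 F k hk') s s' := by omega
          omega
      omega
  have hfam : extFam M0 F f le_rfl = Sum.elim M0 F := by
    funext x
    cases x with
    | inl i => rfl
    | inr j =>
      simp only [extFam, Sum.elim_inr]
      exact congrArg F (Fin.ext rfl)
  have hfin : dmin (Sum.elim M0 F) = d + f := by
    rw [← hfam]; exact key f le_rfl
  exact ⟨hfin, fun h1 => by omega⟩
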